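/- Let Γ be a connected finite simple graph on n vertices that is strongly regular with parameters (n, k, λ, μ) with 0 < k < n − 1, let r > s be the two real roots of x² + (μ − λ)x + (μ − k), and let f and g denote the multiplicities of r and s, respectively, as eigenvalues of the adjacency matrix of Γ over ℝ (i.e. the dimensions of the corresponding eigenspaces). Then 1 + f + g = n, k + f·r + g·s = 0, and consequently f = (−s(n − 1) − k)/(r − s) and g = (r(n − 1) + k)/(r − s). -/

import Mathlib

open Matrix DirectSum

section Aux

/-- The eigenspace of a conjugated endomorphism is the image of the eigenspace. -/
lemma eigenspace_conj_map {M N : Type*} [AddCommGroup M] [Module ℝ M]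
    [AddCommGroup N] [Module ℝ N] (e : N ≃ₗ[ℝ] M) (f : Module.End ℝ M) (μ : ℝ) :
    Module.End.eigenspace (e.symm.conj f) μ
      = (Module.End.eigenspace f μ).map (e.symm : M →ₗ[ℝ] N) := by
  ext x
  rw [Module.End.mem_eigenspace_iff, Submodule.mem_map]
  constructor
  · intro hx
    refine ⟨e x, Module.End.mem_eigenspace_iff.mpr ?_, by simp⟩
    have := congrArg e hx
    simpa [LinearEquiv.conj_apply] using this
  · rintro ⟨y, hy, rfl⟩
    replace hy := Module.End.mem_eigenspace_iff.mp hy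
    simp [LinearEquiv.conj_apply, hy]

lemma finrank_eigenspace_conj {M N : Type*} [AddCommGroup M] [Module ℝ M]
    [AddCommGroup N] [Module ℝ N] (e : N ≃ₗ[ℝ] M) (f : Module.End ℝ M) (μ : ℝ) :
    Module.finrank ℝ (Module.End.eigenspace (e.symm.conj f) μ)
      = Module.finrank ℝ (Module.End.eigenspace f μ) := by
  rw [eigenspace_conj_map]
  exact LinearEquiv.finrank_map_eq e.symm _

lemma eigenspace_conj_eq_bot {M N : Type*} [AddCommGroup M] [Module ℝ M]
    [AddCommGroup N] [Module ℝ N] (e : N ≃ₗ[ℝ] M) (f : Module.End ℝ M) (μ : ℝ)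
    (hb : Module.End.eigenspace f μ = ⊥) :
    Module.End.eigenspace (e.symm.conj f) μ = ⊥ := by
  rw [eigenspace_conj_map, hb, Submodule.map_bot]

/-- Converting a sum over the (bundled) eigenvalues to a sum over a finset containing
all eigenvalues, for a function vanishing on non-eigenvalues. -/
lemma sum_eigenvalues_eq {E : Type*} [AddCommGroup E] [Module ℝ E] (T : Module.End ℝ E)
    [Fintype (Module.End.Eigenvalues T)] (S : Finset ℝ)
    (hS : ∀ μ : Module.End.Eigenvalues T, μ.1 ∈ S)
    {β : Type*} [AddCommMonoid β] (F : ℝ → β)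
    (hF : ∀ t, Module.End.eigenspace T t = ⊥ → F t = 0) :
    ∑ μ : Module.End.Eigenvalues T, F μ.1 = ∑ t ∈ S, F t := by
  classical
  have hinj : ∀ x ∈ (Finset.univ : Finset (Module.End.Eigenvalues T)),
      ∀ y ∈ Finset.univ, x.1 = y.1 → x = y := fun x _ y _ hxy => Subtype.ext hxy
  have h1 : ∑ t ∈ Finset.univ.image (fun μ : Module.End.Eigenvalues T => μ.1), F t
      = ∑ μ : Module.End.Eigenvalues T, F μ.1 := Finset.sum_image hinj
  rw [← h1]
  refine Finset.sum_subset (fun t ht => ?_) (fun t htS htim => ?_)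
  · obtain ⟨μ, _, rfl⟩ := Finset.mem_image.mp ht
    exact hS μ
  · apply hF
    by_contra hbot
    exact htim (Finset.mem_image.mpr
      ⟨⟨t, Module.End.hasEigenvalue_iff.mpr hbot⟩, Finset.mem_univ _, rfl⟩)

end Aux

set_option maxHeartbeats 2000000 in
/-- Multiplicities of the restricted eigenvalues of a connected strongly regular graph:
with `r > s` the roots of `x² + (μ − λ)x + (μ − k)` and `f`, `g` the dimensions of the
corresponding eigenspaces of the adjacency matrix, one has `1 + f + g = n`,
`k + f r + g s = 0`, `f = (−s(n−1) − k)/(r − s)` and `g = (r(n−1) + k)/(r − s)`. -/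
theorem stmt_7 {V : Type*} [Fintype V] [DecidableEq V]
    (Γ : SimpleGraph V) [DecidableRel Γ.Adj]
    (n k l m : ℕ) (h : Γ.IsSRGWith n k l m) (hconn : Γ.Connected)
    (hk0 : 0 < k) (hkn : k + 1 < n)
    (r s : ℝ) (hrs : s < r)
    (hr : r ^ 2 + ((m : ℝ) - l) * r + ((m : ℝ) - k) = 0)
    (hs : s ^ 2 + ((m : ℝ) - l) * s + ((m : ℝ) - k) = 0)
    (f g : ℕ)
    (hf : f = Module.finrank ℝ
      (Module.End.eigenspace (Matrix.mulVecLin (Γ.adjMatrix ℝ)) r))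
    (hg : g = Module.finrank ℝ
      (Module.End.eigenspace (Matrix.mulVecLin (Γ.adjMatrix ℝ)) s)) :
    1 + f + g = n ∧ (k : ℝ) + f * r + g * s = 0 ∧
    (f : ℝ) = (-s * ((n : ℝ) - 1) - k) / (r - s) ∧
    (g : ℝ) = (r * ((n : ℝ) - 1) + k) / (r - s) := by
  classical
  have hcard : Fintype.card V = n := h.card
  have hV : Nonempty V := by
    rw [← Fintype.card_pos_iff, hcard]; omega
  obtain ⟨v₀⟩ := hV
  -- m is positive
  have hm0 : 0 < m := by
    by_contra hm
    have hm' : m = 0 := by omega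
    have step : ∀ (v w : V), Γ.Reachable v w → v = w ∨ Γ.Adj v w := by
      intro v w hvw
      obtain ⟨p⟩ := hvw
      induction p with
      | nil => exact Or.inl rfl
      | @cons u x w hadj p ih =>
        rcases ih with rfl | hxw
        · exact Or.inr hadj
        · by_cases huw : u = w
          · exact Or.inl huw
          · by_cases hadj2 : Γ.Adj u w
            · exact Or.inr hadj2
            · exfalso
              have hcard0 := h.of_not_adj huw hadj2
              rw [hm'] at hcard0
              have : 0 < Fintype.card (Γ.commonNeighbors u w) :=
                Fintype.card_pos_iff.mpr ⟨⟨x, hadj, hxw.symm⟩⟩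
              omega
    -- there exist distinct nonadjacent vertices
    have hsub : Γ.neighborFinset v₀ ⊆ Finset.univ.erase v₀ := by
      intro u hu
      rw [SimpleGraph.mem_neighborFinset] at hu
      exact Finset.mem_erase.mpr ⟨(Γ.ne_of_adj hu).symm, Finset.mem_univ _⟩
    have hlt : (Γ.neighborFinset v₀).card < (Finset.univ.erase v₀).card := by
      rw [Γ.card_neighborFinset_eq_degree, h.regular v₀, Finset.card_erase_of_mem
        (Finset.mem_univ _), Finset.card_univ, hcard]
      omega
    obtain ⟨w, hw1, hw2⟩ := Finset.exists_of_ssubset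
      (hsub.ssubset_of_ne (fun hEq => by rw [hEq] at hlt; exact lt_irrefl _ hlt))
    rw [Finset.mem_erase] at hw1
    rw [SimpleGraph.mem_neighborFinset] at hw2
    rcases step v₀ w (hconn.preconnected v₀ w) with rfl | hadj
    · exact hw1.1 rfl
    · exact hw2 hadj
  -- l < k
  have hlk : l < k := by
    have hdeg : 0 < Γ.degree v₀ := by rw [h.regular v₀]; exact hk0
    obtain ⟨w, hw⟩ := Finset.card_pos.mp (by rwa [Γ.card_neighborFinset_eq_degree])
    rw [SimpleGraph.mem_neighborFinset] at hw
    have := hw.card_commonNeighbors_lt_degree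
    rwa [h.of_adj v₀ w hw, h.regular v₀] at this
  -- Vieta
  have hsum : r + s = (l : ℝ) - m := by
    have hne : r - s ≠ 0 := sub_ne_zero.mpr (ne_of_gt hrs)
    have key : (r - s) * (r + s + ((m : ℝ) - l)) = 0 := by linear_combination hr - hs
    rcases mul_eq_zero.mp key with h1 | h2
    · exact absurd h1 hne
    · linarith
  have hprod : r * s = (m : ℝ) - k := by linear_combination r * hsum - hr
  -- k is not a root
  have hkr : (k : ℝ) ≠ r := by
    intro hkr
    have hH := hr
    rw [← hkr] at hH
    have hl : (l : ℝ) ≤ (k : ℝ) - 1 := by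
      have : (l : ℝ) + 1 ≤ k := by exact_mod_cast hlk
      linarith
    have hm1 : (1 : ℝ) ≤ m := by exact_mod_cast hm0
    have hk1 : (1 : ℝ) ≤ k := by exact_mod_cast hk0
    nlinarith
  have hks : (k : ℝ) ≠ s := by
    intro hks
    have hH := hs
    rw [← hks] at hH
    have hl : (l : ℝ) ≤ (k : ℝ) - 1 := by
      have : (l : ℝ) + 1 ≤ k := by exact_mod_cast hlk
      linarith
    have hm1 : (1 : ℝ) ≤ m := by exact_mod_cast hm0
    have hk1 : (1 : ℝ) ≤ k := by exact_mod_cast hk0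
    nlinarith
  -- the adjacency matrix
  set A : Matrix V V ℝ := Γ.adjMatrix ℝ with hA
  set J : Matrix V V ℝ := Matrix.of fun _ _ => (1 : ℝ) with hJ
  have hcompl : Γᶜ.adjMatrix ℝ = J - 1 - A := by
    ext i j
    by_cases hij : i = j
    · subst hij; simp [hJ, hA, Matrix.one_apply]
    · by_cases hadj : Γ.Adj i j <;>
        simp [hJ, hA, Matrix.one_apply, hij, hadj, SimpleGraph.compl_adj]
  have hA2 : A * A = (k : ℝ) • 1 + (l : ℝ) • A + (m : ℝ) • (J - 1 - A) := by
    have hme := h.matrix_eq (α := ℝ)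
    rw [pow_two, hcompl] at hme
    rw [hme]
    simp [Nat.cast_smul_eq_nsmul, hA]
  have key : (A - r • 1) * (A - s • 1) = (m : ℝ) • J := by
    have expand : (A - r • 1) * (A - s • 1)
        = A * A - (r + s) • A + (r * s) • 1 := by
      simp only [sub_mul, mul_sub, Matrix.smul_mul, Matrix.mul_smul, one_mul,
        Matrix.mul_one, Matrix.one_mul, smul_smul, add_smul]
      rw [mul_comm s r]
      abel
    rw [expand, hA2, hsum, hprod]
    module
  -- any eigenvalue other than k, r, s has trivial eigenspace
  have hbotother : ∀ t : ℝ, t ≠ (k : ℝ) → t ≠ r → t ≠ s →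
      Module.End.eigenspace (Matrix.mulVecLin A) t = ⊥ := by
    intro t htk htr hts
    rw [Submodule.eq_bot_iff]
    intro x hx
    rw [Module.End.mem_eigenspace_iff] at hx
    rw [Matrix.mulVecLin_apply] at hx
    have h1 : ((A - r • 1) * (A - s • 1)) *ᵥ x = ((t - r) * (t - s)) • x := by
      rw [← Matrix.mulVec_mulVec]
      have e1 : (A - s • (1 : Matrix V V ℝ)) *ᵥ x = (t - s) • x := by
        rw [Matrix.sub_mulVec, Matrix.smul_mulVec, Matrix.one_mulVec, hx,
          sub_smul]
      rw [e1, Matrix.mulVec_smul, Matrix.sub_mulVec, Matrix.smul_mulVec,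
        Matrix.one_mulVec, hx, ← sub_smul, smul_smul, mul_comm]
    rw [key] at h1
    have hq : (t - r) * (t - s) ≠ 0 :=
      mul_ne_zero (sub_ne_zero.mpr htr) (sub_ne_zero.mpr hts)
    set c : ℝ := (m : ℝ) * (∑ j, x j) / ((t - r) * (t - s)) with hc
    have hxc : ∀ i, x i = c := by
      intro i
      have := congrFun h1 i
      simp only [Matrix.smul_mulVec, Pi.smul_apply, smul_eq_mul] at this
      have hJx : (J *ᵥ x) i = ∑ j, x j := by
        simp [hJ, Matrix.mulVec, dotProduct]
      rw [hJx] at this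
      rw [hc, eq_div_iff hq]
      linarith [this]
    have hc0 : c = 0 := by
      have hAx : (A *ᵥ x) v₀ = (k : ℝ) * c := by
        rw [hA]
        rw [SimpleGraph.adjMatrix_mulVec_apply]
        rw [Finset.sum_congr rfl fun u _ => hxc u]
        rw [Finset.sum_const, Γ.card_neighborFinset_eq_degree, h.regular v₀,
          nsmul_eq_mul]
      have := congrFun hx v₀
      rw [hAx, Pi.smul_apply, smul_eq_mul, hxc v₀] at this
      rcases mul_eq_zero.mp (show (t - (k : ℝ)) * c = 0 by linarith) with h1 | h2
      · exact absurd (by linarith : t = (k : ℝ)) htk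
      · exact h2
    funext i
    rw [hxc i, hc0]
    rfl
  -- eigenspace at k is the kernel of the Laplacian
  have hEk : Module.End.eigenspace (Matrix.mulVecLin A) (k : ℝ)
      = LinearMap.ker (Matrix.toLin' (Γ.lapMatrix ℝ)) := by
    ext x
    rw [Module.End.mem_eigenspace_iff, LinearMap.mem_ker, Matrix.toLin'_apply,
      Matrix.mulVecLin_apply, SimpleGraph.lapMatrix, Matrix.sub_mulVec]
    constructor
    · intro hx
      funext i
      have hd : (Γ.degMatrix ℝ *ᵥ x) i = (k : ℝ) * x i := by
        rw [SimpleGraph.degMatrix, Matrix.mulVec_diagonal, h.regular i]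
      have := congrFun hx i
      rw [Pi.smul_apply, smul_eq_mul] at this
      simp [hd, ← hA, this]
    · intro hx
      funext i
      have hd : (Γ.degMatrix ℝ *ᵥ x) i = (k : ℝ) * x i := by
        rw [SimpleGraph.degMatrix, Matrix.mulVec_diagonal, h.regular i]
      have := congrFun hx i
      rw [Pi.sub_apply, hd, Pi.zero_apply, sub_eq_zero] at this
      rw [Pi.smul_apply, smul_eq_mul]
      linarith
  have hDk1 : Module.finrank ℝ
      (Module.End.eigenspace (Matrix.mulVecLin A) (k : ℝ)) = 1 := by
    rw [hEk, ← Γ.card_connectedComponent_eq_finrank_ker_toLin'_lapMatrix]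
    haveI := hconn.preconnected.subsingleton_connectedComponent
    haveI : Nonempty Γ.ConnectedComponent := ⟨Γ.connectedComponentMk v₀⟩
    exact le_antisymm (Fintype.card_le_one_iff_subsingleton.mpr ‹_›)
      Fintype.card_pos
  -- move to Euclidean space
  set e : EuclideanSpace ℝ V ≃ₗ[ℝ] (V → ℝ) := WithLp.linearEquiv 2 ℝ (V → ℝ) with he
  set T : Module.End ℝ (EuclideanSpace ℝ V) := e.symm.conj (Matrix.mulVecLin A)
    with hT
  have hTeq : Matrix.toEuclideanLin A = T := by
    apply LinearMap.ext
    intro x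
    rfl
  have hTsymm : T.IsSymmetric := by
    rw [← hTeq]
    rw [← Matrix.isHermitian_iff_isSymmetric]
    ext i j
    simp [hA, Matrix.conjTranspose_apply, SimpleGraph.adjMatrix_apply,
      SimpleGraph.adj_comm]
  have hInt := hTsymm.direct_sum_isInternal
  -- dimension transfers
  have hDrT : Module.finrank ℝ (Module.End.eigenspace T r) = f := by
    rw [hT, finrank_eigenspace_conj, hf]
  have hDsT : Module.finrank ℝ (Module.End.eigenspace T s) = g := by
    rw [hT, finrank_eigenspace_conj, hg]
  have hDkT : Module.finrank ℝ (Module.End.eigenspace T (k : ℝ)) = 1 := by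
    rw [hT, finrank_eigenspace_conj]
    exact hDk1
  have hbotT : ∀ t : ℝ, t ≠ (k : ℝ) → t ≠ r → t ≠ s →
      Module.End.eigenspace T t = ⊥ := by
    intro t h1 h2 h3
    rw [hT]
    exact eigenspace_conj_eq_bot _ _ _ (hbotother t h1 h2 h3)
  -- the finset of possible eigenvalues
  set S : Finset ℝ := {(k : ℝ), r, s} with hS
  have hSmem : ∀ μ : Module.End.Eigenvalues T, μ.1 ∈ S := by
    intro μ
    by_contra hmem
    simp only [hS, Finset.mem_insert, Finset.mem_singleton, not_or] at hmem
    exact μ.2 (hbotT μ.1 hmem.1 hmem.2.1 hmem.2.2)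
  have hknotmem : (k : ℝ) ∉ ({r, s} : Finset ℝ) := by
    simp [hkr, hks]
  have hrnotmem : r ∉ ({s} : Finset ℝ) := by
    simp [ne_of_gt hrs]
  -- first identity : 1 + f + g = n
  have hsum1 : 1 + f + g = n := by
    have hfr : ∑ μ : Module.End.Eigenvalues T,
        Module.finrank ℝ (Module.End.eigenspace T μ.1) = n := by
      have e2 : (⨁ μ : Module.End.Eigenvalues T, Module.End.eigenspace T (μ : ℝ))
          ≃ₗ[ℝ] EuclideanSpace ℝ V :=
        LinearEquiv.ofBijective
          (DirectSum.coeLinearMap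
            (fun μ : Module.End.Eigenvalues T => Module.End.eigenspace T μ.1)) hInt
      have h3 := e2.finrank_eq
      rw [Module.finrank_directSum, finrank_euclideanSpace, hcard] at h3
      exact h3
    rw [sum_eigenvalues_eq T S hSmem
      (fun t => Module.finrank ℝ (Module.End.eigenspace T t))
      (fun t ht => by simp [ht])] at hfr
    rw [hS, Finset.sum_insert hknotmem, Finset.sum_insert hrnotmem,
      Finset.sum_singleton, hDkT, hDrT, hDsT] at hfr
    omega
  -- trace identity
  have htr0 : LinearMap.trace ℝ _ T = 0 := by
    rw [hT, LinearMap.trace_conj']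
    have : LinearMap.trace ℝ (V → ℝ) (Matrix.mulVecLin A) = Matrix.trace A := by
      rw [LinearMap.trace_eq_matrix_trace ℝ (Pi.basisFun ℝ V),
        LinearMap.toMatrix_eq_toMatrix', ← Matrix.toLin'_apply',
        LinearMap.toMatrix'_toLin']
    rw [this, hA, SimpleGraph.trace_adjMatrix]
  have hmapsTo : ∀ μ : Module.End.Eigenvalues T,
      Set.MapsTo T (Module.End.eigenspace T μ.1)
        (Module.End.eigenspace T μ.1) := by
    intro μ x hx
    rw [SetLike.mem_coe, Module.End.mem_eigenspace_iff] at hx ⊢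
    rw [hx, _root_.map_smul, hx]
  have hsum2 : (k : ℝ) + f * r + g * s = 0 := by
    have htr : LinearMap.trace ℝ _ T = ∑ μ : Module.End.Eigenvalues T,
        μ.1 * Module.finrank ℝ (Module.End.eigenspace T μ.1) := by
      rw [LinearMap.trace_eq_sum_trace_restrict hInt hmapsTo]
      refine Finset.sum_congr rfl fun μ _ => ?_
      have hres : T.restrict (hmapsTo μ) = μ.1 • LinearMap.id := by
        apply LinearMap.ext
        rintro ⟨x, hx⟩
        rw [Module.End.mem_eigenspace_iff] at hx
        apply Subtype.ext
        exact hx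
      erw [hres, _root_.map_smul, LinearMap.trace_id, smul_eq_mul]
      rfl
    rw [htr0] at htr
    rw [sum_eigenvalues_eq T S hSmem
      (fun t => t * Module.finrank ℝ (Module.End.eigenspace T t))
      (fun t ht => by simp [ht])] at htr
    rw [hS, Finset.sum_insert hknotmem, Finset.sum_insert hrnotmem,
      Finset.sum_singleton, hDkT, hDrT, hDsT] at htr
    push_cast at htr ⊢
    linarith
  refine ⟨hsum1, hsum2, ?_, ?_⟩
  · have hne : r - s ≠ 0 := sub_ne_zero.mpr (ne_of_gt hrs)
    have eqB : (f : ℝ) + g = (n : ℝ) - 1 := by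
      have : ((1 + f + g : ℕ) : ℝ) = (n : ℝ) := by exact_mod_cast hsum1
      push_cast at this
      linarith
    rw [eq_div_iff hne]
    linear_combination hsum2 - s * eqB
  · have hne : r - s ≠ 0 := sub_ne_zero.mpr (ne_of_gt hrs)
    have eqB : (f : ℝ) + g = (n : ℝ) - 1 := by
      have : ((1 + f + g : ℕ) : ℝ) = (n : ℝ) := by exact_mod_cast hsum1
      push_cast at this
      linarith
    rw [eq_div_iff hne]
    linear_combination r * eqB - hsum2
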